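/- Let G be a group, p a prime number, and K a finite normal subgroup of G. Let Q be a Sylow p-subgroup of K which is normal in K (hence the unique Sylow p-subgroup of K), and assume the quotient group K/Q is cyclic. Let H be a subgroup of G such that K ∩ H is trivial and K·H = G (equivalently, the composite map H → G → G/K is an isomorphism). Then there exists a normal subgroup N of G such that N ∩ Q is trivial and the index [G : N] is at most (|Q| · (|Q|)!)!. -/

import Mathlib

open Subgroup Pointwise

/-- **Lemma 4.1 of the paper.**  Let `G` be a group, `p` a prime, `K` a finite normal
subgroup of `G`, `Q ≤ K` a Sylow `p`-subgroup of `K` which is normal in `K`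
(hence the unique one), with `K/Q` cyclic.  Let `H ≤ G` with `K ∩ H = ⊥` and
`K ⊔ H = G`.  Then there is a normal subgroup `N ⊴ G` with `N ⊓ Q = ⊥` and
`[G : N] ≤ (|Q| · |Q|!)!`. -/
theorem bounding_ramification_lemma_4_1
    {G : Type*} [Group G] (p : ℕ) (hp : p.Prime)
    (K Q H : Subgroup G) [K.Normal] [Finite K] (hQK : Q ≤ K)
    (hSyl : ∃ S : Sylow p K, (S : Subgroup K) = Q.subgroupOf K)
    [hQnK : (Q.subgroupOf K).Normal]
    (hcyc : IsCyclic (↥K ⧸ Q.subgroupOf K))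
    (hKH : K ⊓ H = ⊥) (hKHtop : K ⊔ H = ⊤) :
    ∃ N : Subgroup G, N.Normal ∧ N ⊓ Q = ⊥ ∧
      N.index ≤ Nat.factorial (Nat.card Q * Nat.factorial (Nat.card Q)) := by
  haveI hpf : Fact p.Prime := ⟨hp⟩
  obtain ⟨S, hS⟩ := hSyl
  haveI hQfin : Finite Q := Finite.of_injective _ (Subgroup.inclusion_injective hQK)
  -- `Q` is a `p`-group
  have hQp : IsPGroup p Q := by
    have h1 : IsPGroup p (Q.subgroupOf K) := hS ▸ S.2
    have h2 := h1.map K.subtype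
    rwa [subgroupOf_map_subtype, inf_eq_left.mpr hQK] at h2
  -- `Q` is normal in `G`
  haveI hSN : (S : Subgroup K).Normal := hS ▸ hQnK
  haveI hchar : (Q.subgroupOf K).Characteristic :=
    hS ▸ Sylow.characteristic_of_normal S hSN
  haveI hQG : Q.Normal := by
    have h3 : ((Q.subgroupOf K).map K.subtype).Normal :=
      ConjAct.normal_of_characteristic_of_normal
    rwa [subgroupOf_map_subtype, inf_eq_left.mpr hQK] at h3
  -- the index `m = [K : Q]` is prime to `p`
  set m : ℕ := (Q.subgroupOf K).index with hm_def
  have hpm : ¬ p ∣ m := by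
    have := Sylow.not_dvd_index S
    rwa [hS] at this
  -- any `m`-torsion element of `Q` is trivial
  have hm : ∀ x ∈ Q, x ^ m = 1 → x = 1 := by
    intro x hx hxm
    obtain ⟨k, hk⟩ := hQp ⟨x, hx⟩
    have hk' : x ^ p ^ k = 1 := by
      have := congrArg (Subtype.val) hk
      simpa using this
    have h1 : orderOf x ∣ p ^ k := orderOf_dvd_of_pow_eq_one hk'
    have h2 : orderOf x ∣ m := orderOf_dvd_of_pow_eq_one hxm
    have hcop : Nat.Coprime (p ^ k) m :=
      Nat.Coprime.pow_left k ((Nat.Prime.coprime_iff_not_dvd hp).mpr hpm)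
    have : orderOf x = 1 := Nat.eq_one_of_dvd_coprimes hcop h1 h2
    exact orderOf_eq_one_iff.mp this
  -- the centralizer of `Q` inside `K`
  set C : Subgroup G := Subgroup.centralizer (Q : Set G) ⊓ K with hC_def
  have hCK : C ≤ K := inf_le_right
  have hCcent : ∀ u ∈ C, ∀ v ∈ Q, v * u = u * v := by
    intro u hu v hv
    exact (Subgroup.mem_centralizer_iff.mp hu.1) v hv
  haveI hCN : C.Normal := by
    constructor
    intro n hn g
    refine ⟨Subgroup.mem_centralizer_iff.mpr fun q hq => ?_, ‹K.Normal›.conj_mem n hn.2 g⟩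
    have hq' : g⁻¹ * q * g ∈ Q := by
      have := hQG.conj_mem q hq g⁻¹
      simpa using this
    have h2 := congrArg (fun x => g * x * g⁻¹) (hCcent n hn (g⁻¹ * q * g) hq')
    simpa [mul_assoc] using h2
  -- `C` is commutative, via the cyclic quotient `K/Q`
  have hcomm : ∀ x ∈ C, ∀ y ∈ C, x * y = y * x := by
    set ψ : ↥K →* ↥K ⧸ Q.subgroupOf K := QuotientGroup.mk' (Q.subgroupOf K) with hψ_def
    set Cb : Subgroup (↥K ⧸ Q.subgroupOf K) := (C.subgroupOf K).map ψ with hCb_def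
    obtain ⟨gen, hgen⟩ := IsCyclic.exists_generator (α := ↥Cb)
    obtain ⟨c', hc'C, hc'⟩ := Subgroup.mem_map.mp gen.2
    set c : G := (c' : G) with hc_def
    have hcC : c ∈ C := hc'C
    have key : ∀ x ∈ C, ∃ (i : ℤ) (q : G), q ∈ Q ∧ q ∈ C ∧ x = c ^ i * q := by
      intro x hx
      have hxK : x ∈ K := hCK hx
      have hx' : (⟨x, hxK⟩ : ↥K) ∈ C.subgroupOf K := hx
      have hmem : ψ ⟨x, hxK⟩ ∈ Cb := Subgroup.mem_map_of_mem ψ hx'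
      obtain ⟨i, hi⟩ := hgen ⟨ψ ⟨x, hxK⟩, hmem⟩
      have hival : ψ (c' ^ i) = ψ ⟨x, hxK⟩ := by
        have := congrArg (Subtype.val) hi
        simp only [SubgroupClass.coe_zpow] at this
        rw [map_zpow, hc']
        exact this
      have hker : (c' ^ i)⁻¹ * ⟨x, hxK⟩ ∈ Q.subgroupOf K := by
        rw [← QuotientGroup.ker_mk' (Q.subgroupOf K)]
        have : ψ ((c' ^ i)⁻¹ * ⟨x, hxK⟩) = 1 := by
          rw [map_mul, map_inv, hival]
          simp
        exact this
      refine ⟨i, c ^ (-i) * x, ?_, ?_, ?_⟩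
      · have : ((c' ^ i)⁻¹ * ⟨x, hxK⟩ : ↥K) = (⟨c ^ (-i) * x, by
          rw [zpow_neg]; exact K.mul_mem (K.inv_mem (zpow_mem (hCK hcC) i)) hxK⟩ : ↥K) := by
          apply Subtype.ext
          push_cast
          rw [zpow_neg]
        rw [this] at hker
        exact hker
      · exact C.mul_mem (by rw [zpow_neg]; exact C.inv_mem (zpow_mem hcC i)) hx
      · rw [zpow_neg, ← mul_assoc, mul_inv_cancel, one_mul]
    intro x hx y hy
    obtain ⟨i, q1, hq1Q, hq1C, hxeq⟩ := key x hx
    obtain ⟨j, q2, hq2Q, hq2C, hyeq⟩ := key y hy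
    have hcc : Commute (c ^ i) (c ^ j) := (Commute.refl c).zpow_zpow i j
    have h_ci_q2 : Commute (c ^ i) q2 :=
      Commute.symm (hCcent (c ^ i) (zpow_mem hcC i) q2 hq2Q : Commute q2 (c ^ i))
    have h_q1_cj : Commute q1 (c ^ j) :=
      (hCcent (c ^ j) (zpow_mem hcC j) q1 hq1Q : Commute q1 (c ^ j))
    have h_q1_q2 : Commute q1 q2 :=
      (hCcent q2 hq2C q1 hq1Q : Commute q1 q2)
    rw [hxeq, hyeq]
    exact ((hcc.mul_right h_ci_q2).mul_left (h_q1_cj.mul_right h_q1_q2)).eq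
  -- the subgroup of `m`-torsion elements of `C`
  set T : Subgroup G :=
    { carrier := {x | x ∈ C ∧ x ^ m = 1}
      one_mem' := ⟨C.one_mem, one_pow m⟩
      mul_mem' := by
        rintro a b ⟨haC, ham⟩ ⟨hbC, hbm⟩
        refine ⟨C.mul_mem haC hbC, ?_⟩
        rw [Commute.mul_pow (hcomm a haC b hbC), ham, hbm, one_mul]
      inv_mem' := by
        rintro a ⟨haC, ham⟩
        exact ⟨C.inv_mem haC, by rw [inv_pow, ham, inv_one]⟩ } with hT_def
  have hTmem : ∀ x, x ∈ T ↔ x ∈ C ∧ x ^ m = 1 := fun x => Iff.rfl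
  have hTC : T ≤ C := fun x hx => ((hTmem x).mp hx).1
  have hTK : T ≤ K := le_trans hTC hCK
  haveI hTN : T.Normal := by
    constructor
    intro n hn g
    obtain ⟨hnC, hnm⟩ := (hTmem n).mp hn
    refine (hTmem _).mpr ⟨hCN.conj_mem n hnC g, ?_⟩
    rw [conj_pow, hnm, mul_one, mul_inv_cancel]
  have hTQ : T ⊓ Q = ⊥ := by
    rw [eq_bot_iff]
    rintro x ⟨hxT, hxQ⟩
    exact hm x hxQ ((hTmem x).mp hxT).2
  haveI hTfin : Finite T := Finite.of_injective _ (Subgroup.inclusion_injective hTK)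
  -- `H` has index `|K|` in `G`
  have hcompl : IsComplement' K H := by
    apply isComplement'_of_disjoint_and_mul_eq_univ (disjoint_iff.mpr hKH)
    rw [← Subgroup.normal_mul, hKHtop, Subgroup.coe_top]
  have hHidx : H.index = Nat.card K := hcompl.index_eq_card
  have hKpos : Nat.card K ≠ 0 := Nat.card_pos.ne'
  have h1 : H.relIndex (T ⊔ H) * (T ⊔ H).index = H.index :=
    relIndex_mul_index le_sup_right
  have hrelfin : H.relIndex (T ⊔ H) ≠ 0 := by
    intro h0
    rw [h0, zero_mul] at h1
    exact hKpos (by rw [← hHidx, ← h1])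
  have hTHfin : (T ⊔ H).index ≠ 0 := by
    intro h0
    rw [h0, mul_zero] at h1
    exact hKpos (by rw [← hHidx, ← h1])
  -- `|T| ≤ [T ⊔ H : H]`
  have h2 : Nat.card T ≤ H.relIndex (T ⊔ H) := by
    haveI : Finite (↥(T ⊔ H) ⧸ H.subgroupOf (T ⊔ H)) := by
      have hne : (H.subgroupOf (T ⊔ H)).index ≠ 0 := hrelfin
      rw [Subgroup.index_eq_card] at hne
      exact (Nat.card_ne_zero.mp hne).2
    have hinj : Function.Injective (fun t : ↥T =>
        (QuotientGroup.mk (⟨(t : G), (le_sup_left : T ≤ T ⊔ H) t.2⟩ : ↥(T ⊔ H)) :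
          ↥(T ⊔ H) ⧸ H.subgroupOf (T ⊔ H))) := by
      intro a b hab
      have hmem := QuotientGroup.eq.mp hab
      have hH : (a : G)⁻¹ * b ∈ H := hmem
      have hK : (a : G)⁻¹ * b ∈ K := K.mul_mem (K.inv_mem (hTK a.2)) (hTK b.2)
      have hbot : (a : G)⁻¹ * b ∈ K ⊓ H := Subgroup.mem_inf.mpr ⟨hK, hH⟩
      rw [hKH, Subgroup.mem_bot] at hbot
      exact Subtype.ext (inv_mul_eq_one.mp hbot)
    have := Nat.card_le_card_of_injective _ hinj
    rwa [← Subgroup.index_eq_card] at this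
  -- `|T| * [K : T] = |K|`
  have h3 : Nat.card T * T.relIndex K = Nat.card K := by
    have hc := Subgroup.card_mul_index (T.subgroupOf K)
    rwa [Nat.card_congr (Subgroup.subgroupOfEquivOfLe hTK).toEquiv] at hc
  -- `[G : T ⊔ H] ≤ [K : T]`
  have hTpos : 0 < Nat.card T := Nat.card_pos
  have h4 : (T ⊔ H).index ≤ T.relIndex K := by
    have hle : (T ⊔ H).index * Nat.card T ≤ T.relIndex K * Nat.card T := by
      calc (T ⊔ H).index * Nat.card T ≤ (T ⊔ H).index * H.relIndex (T ⊔ H) :=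
            Nat.mul_le_mul_left _ h2
        _ = Nat.card K := by rw [mul_comm]; rw [h1, hHidx]
        _ = T.relIndex K * Nat.card T := by rw [← h3, mul_comm]
    exact Nat.le_of_mul_le_mul_right hle hTpos
  have h5 : T.relIndex C * C.relIndex K = T.relIndex K :=
    relIndex_mul_relIndex T C K hTC hCK
  -- `[K : C] ≤ |Q|!` via the conjugation action on `Q`
  have h6 : C.relIndex K ≤ Nat.factorial (Nat.card Q) := by
    set f : G →* MulAut ↥Q := MulAut.conjNormal with hf_def
    have hkerf : f.ker = Subgroup.centralizer (Q : Set G) := by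
      ext g
      simp only [MonoidHom.mem_ker]
      constructor
      · intro hg
        rw [Subgroup.mem_centralizer_iff]
        intro q hq
        have happ : ((f g) ⟨q, hq⟩ : G) = q := by rw [hg]; simp [MulAut.one_apply]
        rw [MulAut.conjNormal_apply] at happ
        have h2 := congrArg (fun x => x * g) happ
        simpa [mul_assoc] using h2.symm
      · intro hg
        apply MulEquiv.ext
        intro q
        apply Subtype.ext
        rw [MulAut.conjNormal_apply]
        simp only [MulAut.one_apply]
        have := (Subgroup.mem_centralizer_iff.mp hg) (q : G) q.2
        rw [← this]
        group
    have hCrel : C.relIndex K = f.ker.relIndex K := by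
      rw [hkerf, hC_def, inf_relIndex_right]
    rw [hCrel, Subgroup.relIndex_ker]
    haveI : Finite (MulAut ↥Q) := inferInstance
    calc Nat.card (K.map f) ≤ Nat.card (MulAut ↥Q) := Subgroup.card_le_card_group _
      _ ≤ Nat.card (Equiv.Perm ↥Q) :=
          Nat.card_le_card_of_injective _ MulEquiv.toEquiv_injective
      _ = Nat.factorial (Nat.card Q) := by
          classical
          haveI : Fintype ↥Q := Fintype.ofFinite _
          rw [Nat.card_eq_fintype_card, Nat.card_eq_fintype_card, Fintype.card_perm]
  -- `[C : T] ≤ |Q|` via the `m`-th power map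
  have h7 : T.relIndex C ≤ Nat.card Q := by
    set φ : ↥C →* G :=
      { toFun := fun x => (x : G) ^ m
        map_one' := by simp
        map_mul' := by
          intro a b
          show ((a : G) * (b : G)) ^ m = (a : G) ^ m * (b : G) ^ m
          exact Commute.mul_pow (hcomm (a : G) a.2 (b : G) b.2) m } with hφ_def
    have hkerφ : φ.ker = T.subgroupOf C := by
      ext x
      simp only [MonoidHom.mem_ker, Subgroup.mem_subgroupOf]
      constructor
      · intro hx
        exact (hTmem (x : G)).mpr ⟨x.2, hx⟩
      · intro hx
        exact ((hTmem (x : G)).mp hx).2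
    have hrange : φ.range ≤ Q := by
      rintro _ ⟨x, rfl⟩
      have hxK : (x : G) ∈ K := hCK x.2
      have hpow : (⟨(x : G), hxK⟩ : ↥K) ^ m ∈ Q.subgroupOf K :=
        Subgroup.pow_index_mem (Q.subgroupOf K) _
      have : ((⟨(x : G), hxK⟩ : ↥K) ^ m : G) ∈ Q := hpow
      exact (by simpa using this : (x : G) ^ m ∈ Q)
    have : T.relIndex C = Nat.card φ.range := by
      rw [← Subgroup.index_ker φ, hkerφ]
      rfl
    rw [this]
    exact Subgroup.card_le_of_le hrange
  -- assemble
  refine ⟨(T ⊔ H).normalCore, Subgroup.normalCore_normal _, ?_, ?_⟩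
  · have hsupK : (T ⊔ H) ⊓ K = T := by
      apply le_antisymm
      · intro x hx
        obtain ⟨hxTH, hxK⟩ := Subgroup.mem_inf.mp hx
        have hxmem : x ∈ (T : Set G) * (H : Set G) := by
          rw [← Subgroup.normal_mul]; exact hxTH
        obtain ⟨t, ht, h, hh, rfl⟩ := hxmem
        have hhK : h ∈ K := by
          have := K.mul_mem (K.inv_mem (hTK ht)) hxK
          simpa [mul_assoc] using this
        have hbot : h ∈ K ⊓ H := ⟨hhK, hh⟩
        rw [hKH, Subgroup.mem_bot] at hbot
        subst hbot
        show t * 1 ∈ T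
        rw [mul_one]
        exact ht
      · exact le_inf le_sup_left hTK
    have hsupQ : (T ⊔ H) ⊓ Q = ⊥ := by
      calc (T ⊔ H) ⊓ Q = (T ⊔ H) ⊓ (K ⊓ Q) := by rw [inf_eq_right.mpr hQK]
        _ = ((T ⊔ H) ⊓ K) ⊓ Q := by rw [inf_assoc]
        _ = T ⊓ Q := by rw [hsupK]
        _ = ⊥ := hTQ
    rw [eq_bot_iff, ← hsupQ]
    exact inf_le_inf_right Q (Subgroup.normalCore_le _)
  · have hidxbound : (T ⊔ H).index ≤ Nat.card Q * Nat.factorial (Nat.card Q) := by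
      calc (T ⊔ H).index ≤ T.relIndex K := h4
        _ = T.relIndex C * C.relIndex K := h5.symm
        _ ≤ Nat.card Q * Nat.factorial (Nat.card Q) := Nat.mul_le_mul h7 h6
    have hcore : (T ⊔ H).normalCore.index ≤ Nat.factorial ((T ⊔ H).index) := by
      rw [Subgroup.normalCore_eq_ker, Subgroup.index_ker]
      haveI : Finite (G ⧸ (T ⊔ H)) := by
        rw [Subgroup.index_eq_card] at hTHfin
        exact (Nat.card_ne_zero.mp hTHfin).2
      calc Nat.card (MulAction.toPermHom G (G ⧸ (T ⊔ H))).range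
          ≤ Nat.card (Equiv.Perm (G ⧸ (T ⊔ H))) := Subgroup.card_le_card_group _
        _ = Nat.factorial (Nat.card (G ⧸ (T ⊔ H))) := by
            classical
            haveI : Fintype (G ⧸ (T ⊔ H)) := Fintype.ofFinite _
            rw [Nat.card_eq_fintype_card, Nat.card_eq_fintype_card, Fintype.card_perm]
        _ = Nat.factorial ((T ⊔ H).index) := by rw [Subgroup.index_eq_card]
    exact le_trans hcore (Nat.factorial_le hidxbound)
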